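/- Let Q be a finitely splitting lim-sup tree forcing. If (T_i)_{i∈ω} is a ⊇-decreasing sequence in Q and (F_n)_{n∈ω} is a front-sequence such that F_i is a front in T_i for all i, then the tree lim(F̄) := {t ∈ T_max : ∃i, t ≼ s for some s ∈ F_i} is an element of Q and is a subtree of each T_i (fusion). -/
import Mathlib


namespace Sacch

/-- The length-`n` initial segment of an infinite sequence, as a list. -/
def restr (b : ℕ → ℕ) (n : ℕ) : List ℕ := List.ofFn fun i : Fin n => b i

/-- A tree on ω: a set of finite sequences closed under initial segments. -/
def IsTree (T : Set (List ℕ)) : Prop :=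
  ∀ s t : List ℕ, s <+: t → t ∈ T → s ∈ T

/-- The set of immediate successors of `t` in `T`. -/
def succs (T : Set (List ℕ)) (t : List ℕ) : Set (List ℕ) :=
  {s | s ∈ T ∧ ∃ k : ℕ, s = t ++ [k]}

/-- `T` is finitely splitting: every node has finitely many immediate successors. -/
def FinSplit (T : Set (List ℕ)) : Prop :=
  ∀ t ∈ T, (succs T t).Finite

/-- `b` is a chain in `T`: a pairwise `≼`-comparable subset of `T`. -/
def IsChainIn (T b : Set (List ℕ)) : Prop :=
  b ⊆ T ∧ ∀ s ∈ b, ∀ t ∈ b, s <+: t ∨ t <+: s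

/-- `b` is a branch of `T`: a maximal chain. -/
def IsBranch (T b : Set (List ℕ)) : Prop :=
  IsChainIn T b ∧ ∀ b', IsChainIn T b' → b ⊆ b' → b' = b

/-- `A` is an antichain: pairwise `≼`-incomparable. -/
def IsAntichainIn (A : Set (List ℕ)) : Prop :=
  ∀ s ∈ A, ∀ t ∈ A, s ≠ t → ¬(s <+: t ∨ t <+: s)

/-- `F` is a front of `T`: an antichain in `T` meeting every branch of `T`. -/
def IsFront (T F : Set (List ℕ)) : Prop :=
  F ⊆ T ∧ IsAntichainIn F ∧ ∀ b, IsBranch T b → ∃ t ∈ b, t ∈ F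

/-- The norm `μ_T(t)` of a node `t` in a subtree `T`: the `μ`-value of its
set of immediate `T`-successors. -/
noncomputable def normOf (μ : List ℕ → Set (List ℕ) → ℝ)
    (T : Set (List ℕ)) (t : List ℕ) : ℝ := μ t (succs T t)

/-- Along the branch `b` of `T`, `limsup μ_T(b ↾ n) = ∞`. -/
def BranchLimsupInf (μ : List ℕ → Set (List ℕ) → ℝ)
    (T b : Set (List ℕ)) : Prop :=
  ∀ m : ℝ, ∀ N : ℕ, ∃ t ∈ b, N ≤ t.length ∧ m < normOf μ T t

/-- The standing assumptions on `(Tmax, μ)` making a finitely splitting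
lim-sup tree forcing: `Tmax` is a nonempty finitely splitting tree, `μ`
assigns non-negative reals monotonically to sets of successors, singletons
have norm `< 1` and along every branch of `Tmax` the limsup of the norms
is infinite. -/
structure LimSupForcing (Tmax : Set (List ℕ))
    (μ : List ℕ → Set (List ℕ) → ℝ) : Prop where
  tree : IsTree Tmax
  nonempty : Tmax.Nonempty
  finSplit : FinSplit Tmax
  mono : ∀ t : List ℕ, ∀ A B : Set (List ℕ), A ⊆ B → μ t A ≤ μ t B
  nonneg : ∀ t A, 0 ≤ μ t A
  singleton_lt_one : ∀ t s : List ℕ, μ t {s} < 1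
  limsup : ∀ b, IsBranch Tmax b → BranchLimsupInf μ Tmax b

/-- `T ∈ Q`: `T` is a condition of the lim-sup tree forcing `Q = Q(Tmax, μ)`,
i.e. a nonempty subtree of `Tmax` along each of whose branches the limsup of
the norms is infinite. -/
def memQ (Tmax : Set (List ℕ)) (μ : List ℕ → Set (List ℕ) → ℝ)
    (T : Set (List ℕ)) : Prop :=
  T.Nonempty ∧ T ⊆ Tmax ∧ IsTree T ∧
    ∀ b, IsBranch T b → BranchLimsupInf μ T b

/-- `T` is `n`-dense: there is a front of `T` all of whose nodes have
norm `> n`. -/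
def nDense (μ : List ℕ → Set (List ℕ) → ℝ) (T : Set (List ℕ)) (n : ℕ) : Prop :=
  ∃ F, IsFront T F ∧ ∀ t ∈ F, (n : ℝ) < normOf μ T t

end Sacch

namespace Sacch

/-- The downward closure of a set of nodes. -/
def cldn (F : Set (List ℕ)) : Set (List ℕ) := {t | ∃ s ∈ F, t <+: s}

/-- `F'` is stronger than `F`: every element of `F'` extends some element
of `F`. -/
def Stronger (F' F : Set (List ℕ)) : Prop :=
  ∀ t ∈ F', ∃ s ∈ F, s <+: t

/-- `F'` is purely stronger than `F`: it is stronger, and moreover every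
element of `F` is extended by some element of `F'`. -/
def PurelyStronger (F' F : Set (List ℕ)) : Prop :=
  Stronger F' F ∧ ∀ s ∈ F, ∃ t ∈ F', s <+: t

/-- The finite antichain `F` is `n`-dense: the finite tree `cldn F` has a
front all of whose nodes have norm `> n` (computed in `cldn F`). -/
def DenseAntichain (μ : List ℕ → Set (List ℕ) → ℝ) (n : ℕ)
    (F : Set (List ℕ)) : Prop :=
  ∃ F', F' ⊆ cldn F ∧ IsAntichainIn F' ∧ (∀ s ∈ F, ∃ t ∈ F', t <+: s) ∧
    ∀ t ∈ F', (n : ℝ) < normOf μ (cldn F) t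

/-- `F` is a front-sequence: a sequence of finite nonempty antichains in
`Tmax` such that `F (n+1)` is `n`-dense and purely stronger than `F n`. -/
def FrontSeq (Tmax : Set (List ℕ)) (μ : List ℕ → Set (List ℕ) → ℝ)
    (F : ℕ → Set (List ℕ)) : Prop :=
  ∀ n : ℕ, (F n).Finite ∧ (F n).Nonempty ∧ F n ⊆ Tmax ∧ IsAntichainIn (F n) ∧
    DenseAntichain μ n (F (n + 1)) ∧ PurelyStronger (F (n + 1)) (F n)

/-- The limit tree of a front-sequence:
`lim(F̄) = {t ∈ Tmax : ∃ i ∃ s ∈ F i, t ≼ s}`. -/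
def limFront (Tmax : Set (List ℕ)) (F : ℕ → Set (List ℕ)) : Set (List ℕ) :=
  {t | t ∈ Tmax ∧ ∃ i : ℕ, ∃ s ∈ F i, t <+: s}

end Sacch

namespace Sacch

variable {Tmax : Set (List ℕ)} {μ : List ℕ → Set (List ℕ) → ℝ} {F : ℕ → Set (List ℕ)}

/-- Iterated pure-strengthening, upwards. -/
lemma FrontSeq.up (hFS : FrontSeq Tmax μ F) :
    ∀ i j, i ≤ j → ∀ s ∈ F i, ∃ t ∈ F j, s <+: t := by
  intro i j hij
  induction j, hij using Nat.le_induction with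
  | base => exact fun s hs => ⟨s, hs, List.prefix_refl s⟩
  | succ j hij ih =>
    intro s hs
    obtain ⟨t, ht, hst⟩ := ih s hs
    obtain ⟨u, hu, htu⟩ := (hFS j).2.2.2.2.2.2 t ht
    exact ⟨u, hu, hst.trans htu⟩

/-- Iterated pure-strengthening, downwards. -/
lemma FrontSeq.down (hFS : FrontSeq Tmax μ F) :
    ∀ i j, i ≤ j → ∀ t ∈ F j, ∃ s ∈ F i, s <+: t := by
  intro i j hij
  induction j, hij using Nat.le_induction with
  | base => exact fun t ht => ⟨t, ht, List.prefix_refl t⟩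
  | succ j hij ih =>
    intro t ht
    obtain ⟨u, hu, hut⟩ := (hFS j).2.2.2.2.2.1 t ht
    obtain ⟨s, hs, hsu⟩ := ih u hu
    exact ⟨s, hs, hsu.trans hut⟩

/-- A branch of a tree is downward closed. -/
lemma branch_downclosed {L b : Set (List ℕ)} (hL : IsTree L) (hb : IsBranch L b)
    {t u : List ℕ} (ht : t ∈ b) (hut : u <+: t) : u ∈ b := by
  have huL : u ∈ L := hL u t hut (hb.1.1 ht)
  have hchain : IsChainIn L (insert u b) := by
    constructor
    · intro x hx
      rcases hx with rfl | hx
      · exact huL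
      · exact hb.1.1 hx
    · intro x hx y hy
      rcases hx with rfl | hx <;> rcases hy with rfl | hy
      · exact Or.inl (List.prefix_refl _)
      · rcases hb.1.2 y hy t ht with h1 | h1
        · exact List.prefix_or_prefix_of_prefix hut h1
        · exact Or.inl (hut.trans h1)
      · rcases hb.1.2 x hx t ht with h1 | h1
        · exact (List.prefix_or_prefix_of_prefix hut h1).symm
        · exact Or.inr (hut.trans h1)
      · exact hb.1.2 x hx y hy
  have heq := hb.2 _ hchain (Set.subset_insert u b)
  exact heq ▸ Set.mem_insert u b

end Sacch

open Sacch in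
/-- Fusion: if `(T i)` is a decreasing sequence in `Q` and `(F n)` is a
front-sequence with `F i` a front of `T i` for all `i`, then
`lim(F̄) ∈ Q` and `lim(F̄) ⊆ T i` for all `i`. -/
theorem fusion (Tmax : Set (List ℕ)) (μ : List ℕ → Set (List ℕ) → ℝ)
    (h : LimSupForcing Tmax μ) (T : ℕ → Set (List ℕ)) (F : ℕ → Set (List ℕ))
    (hQ : ∀ i, memQ Tmax μ (T i)) (hdec : ∀ i, T (i + 1) ⊆ T i)
    (hFS : FrontSeq Tmax μ F) (hfr : ∀ i, IsFront (T i) (F i)) :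
    memQ Tmax μ (limFront Tmax F) ∧ ∀ i, limFront Tmax F ⊆ T i := by
  classical
  set L := limFront Tmax F with hLdef
  have hLsub : L ⊆ Tmax := fun t ht => ht.1
  have hLtree : IsTree L := by
    intro s t hst ht
    obtain ⟨i, u, hu, htu⟩ := ht.2
    exact ⟨h.tree s t hst ht.1, i, u, hu, hst.trans htu⟩
  obtain ⟨s0, hs0⟩ := (hFS 0).2.1
  have hFsubL : ∀ i, ∀ s ∈ F i, s ∈ L :=
    fun i s hs => ⟨(hFS i).2.2.1 hs, i, s, hs, List.prefix_refl s⟩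
  have hLne : L.Nonempty := ⟨s0, hFsubL 0 s0 hs0⟩
  have hTmono : ∀ i j, i ≤ j → T j ⊆ T i := by
    intro i j hij
    induction j, hij using Nat.le_induction with
    | base => exact fun _ hx => hx
    | succ j hij ih => exact fun x hx => ih (hdec j hx)
  have hup := FrontSeq.up hFS
  have hdown := FrontSeq.down hFS
  have hsubT : ∀ i, L ⊆ T i := by
    intro i t ht
    obtain ⟨j, s, hs, hts⟩ := ht.2
    obtain ⟨s', hs', hss'⟩ := hup j (max i j) (le_max_right _ _) s hs
    have hs'T : s' ∈ T i := hTmono i _ (le_max_left _ _) ((hfr (max i j)).1 hs')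
    exact (hQ i).2.2.1 t s' (hts.trans hss') hs'T
  have hcldn : ∀ n, cldn (F (n + 1)) ⊆ L := by
    intro n x hx
    obtain ⟨s, hs, hxs⟩ := hx
    exact ⟨h.tree x s hxs ((hFS (n + 1)).2.2.1 hs), n + 1, s, hs, hxs⟩
  have hnormle : ∀ n t, normOf μ (cldn (F (n + 1))) t ≤ normOf μ L t := by
    intro n t
    apply h.mono
    intro x hx
    exact ⟨hcldn n hx.1, hx.2⟩
  refine ⟨⟨hLne, hLsub, hLtree, ?_⟩, hsubT⟩
  intro b hb m N
  have hbL : b ⊆ L := hb.1.1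
  have hnilL : [] ∈ L := hLtree [] s0 List.nil_prefix (hFsubL 0 s0 hs0)
  have hbne : b.Nonempty := by
    by_contra hc
    rw [Set.not_nonempty_iff_eq_empty] at hc
    have hchain : IsChainIn L {[]} := by
      constructor
      · intro x hx; rw [Set.mem_singleton_iff] at hx; exact hx ▸ hnilL
      · intro x hx y hy
        rw [Set.mem_singleton_iff] at hx hy
        subst hx; subst hy; exact Or.inl (List.prefix_refl _)
    have := hb.2 {[]} hchain (hc ▸ Set.empty_subset _)
    rw [hc] at this
    exact Set.singleton_ne_empty _ this
  have hdc : ∀ t ∈ b, ∀ u, u <+: t → u ∈ b :=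
    fun t ht u hu => branch_downclosed hLtree hb ht hu
  -- KEY: arbitrarily large norms along b
  have key : ∀ n : ℕ, ∃ t ∈ b, (n : ℝ) < normOf μ L t := by
    intro n
    have hw : ∃ n', n ≤ n' ∧ ∃ w ∈ b, w ∈ F (n' + 1) := by
      obtain ⟨K, hK⟩ : ∃ K : ℕ, ∀ s ∈ F (n + 1), s.length ≤ K := by
        obtain ⟨K, hK⟩ := ((hFS (n + 1)).1.image List.length).bddAbove
        exact ⟨K, fun s hs => hK ⟨s, hs, rfl⟩⟩
      by_cases hcase : ∃ t ∈ b, K < t.length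
      · obtain ⟨t, htb, htK⟩ := hcase
        obtain ⟨j, s, hs, hts⟩ := (hbL htb).2
        rcases le_total j (n + 1) with hj | hj
        · obtain ⟨s', hs', hss'⟩ := hup j (n + 1) hj s hs
          have := (hts.trans hss').length_le.trans (hK s' hs')
          omega
        · obtain ⟨w, hwF, hws⟩ := hdown (n + 1) j hj s hs
          rcases List.prefix_or_prefix_of_prefix hts hws with h1 | h1
          · have := h1.length_le.trans (hK w hwF); omega
          · exact ⟨n, le_refl n, w, hdc t htb w h1, hwF⟩
      · push_neg at hcase
        obtain ⟨t0, ht0⟩ := hbne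
        set P : ℕ → Prop := fun l => ∃ t ∈ b, t.length = l with hPdef
        have hPG : P (Nat.findGreatest P K) :=
          Nat.findGreatest_spec (hcase t0 ht0) ⟨t0, ht0, rfl⟩
        obtain ⟨t, htb, htlen⟩ := hPG
        have hmax : ∀ u ∈ b, u.length ≤ t.length := by
          intro u hu
          by_contra hlt
          push_neg at hlt
          exact Nat.findGreatest_is_greatest (htlen ▸ hlt) (hcase u hu) ⟨u, hu, rfl⟩
        have hle : ∀ u ∈ b, u <+: t := by
          intro u hu
          rcases hb.1.2 u hu t htb with h1 | h1
          · exact h1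
          · have := h1.eq_of_length (le_antisymm h1.length_le (hmax u hu))
            exact this ▸ List.prefix_refl _
        have hnoext : ∀ u ∈ L, t <+: u → u = t := by
          intro u huL htu
          have hchain : IsChainIn L (insert u b) := by
            constructor
            · intro x hx
              rcases hx with rfl | hx
              · exact huL
              · exact hbL hx
            · intro x hx y hy
              rcases hx with rfl | hx <;> rcases hy with rfl | hy
              · exact Or.inl (List.prefix_refl _)
              · exact Or.inr ((hle y hy).trans htu)
              · exact Or.inl ((hle x hx).trans htu)
              · exact hb.1.2 x hx y hy
          have heq := hb.2 _ hchain (Set.subset_insert u b)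
          have hub : u ∈ b := heq ▸ Set.mem_insert u b
          exact (htu.eq_of_length (le_antisymm htu.length_le (hmax u hub))).symm
        obtain ⟨j, s, hs, hts⟩ := (hbL htb).2
        obtain ⟨s', hs', hss'⟩ := hup j (max (n + 1) j) (le_max_right _ _) s hs
        have hst : s' = t := hnoext s' (hFsubL _ s' hs') (hts.trans hss')
        have hJ : max (n + 1) j - 1 + 1 = max (n + 1) j := by omega
        refine ⟨max (n + 1) j - 1, by omega, t, htb, ?_⟩
        rw [hJ]
        exact hst ▸ hs'
    obtain ⟨n', hn', w, hwb, hwF⟩ := hw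
    obtain ⟨F', hF'sub, hF'ac, hcover, hnorm⟩ := (hFS n').2.2.2.2.1
    obtain ⟨t', ht'F', ht'w⟩ := hcover w hwF
    refine ⟨t', hdc w hwb t' ht'w, ?_⟩
    calc (n : ℝ) ≤ (n' : ℝ) := by exact_mod_cast hn'
      _ < normOf μ (cldn (F (n' + 1))) t' := hnorm t' ht'F'
      _ ≤ normOf μ L t' := hnormle n' t'
  -- Finish: bound the norms of the short nodes of b
  set S : Set (List ℕ) := {t | t ∈ b ∧ t.length < N} with hSdef
  have hSfin : S.Finite := by
    apply Set.Finite.of_finite_image (f := List.length)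
    · exact (Set.finite_Iio N).subset (by rintro _ ⟨t, ⟨_, hN⟩, rfl⟩; exact hN)
    · intro x hx y hy hxy
      rcases hb.1.2 x hx.1 y hy.1 with h1 | h1
      · exact h1.eq_of_length hxy
      · exact (h1.eq_of_length hxy.symm).symm
  obtain ⟨M, hM⟩ := (hSfin.image (normOf μ L)).bddAbove
  obtain ⟨n, hn⟩ := exists_nat_gt (max m M)
  obtain ⟨t, htb, htn⟩ := key n
  refine ⟨t, htb, ?_, lt_trans (lt_of_le_of_lt (le_max_left m M) hn) htn⟩
  by_contra hlen
  push_neg at hlen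
  have h1 : normOf μ L t ≤ M := hM ⟨t, ⟨htb, hlen⟩, rfl⟩
  have h2 : M < (n : ℝ) := lt_of_le_of_lt (le_max_right m M) hn
  linarith
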